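/- Let A = !![a11, a12; a21, a22] be a real 2×2 matrix with Tr(A) < 0, det(A) > 0 and a22 > 0 (so a11 < 0). Let 0 < λ < μ. Then there exists exactly one pair (d1, d2) with d1 > 0 and d2 > 0 satisfying simultaneously det(A) − a11·λ·d2 − a22·λ·d1 + λ²·d1·d2 = 0 and det(A) − a11·μ·d2 − a22·μ·d1 + μ²·d1·d2 = 0; moreover its second coordinate equals d2 = (det(A)(λ+μ) − √((det(A)(λ+μ))² − 4·a11·a22·det(A)·λ·μ)) / (2·a11·λ·μ). -/

import Mathlib

open Matrix Polynomial Real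

theorem hyperbolas_intersect_uniquely (a11 a12 a21 a22 lam mu : ℝ)
    (hTr : a11 + a22 < 0) (hDet : 0 < a11 * a22 - a12 * a21)
    (h22 : 0 < a22) (hlam : 0 < lam) (hlm : lam < mu) :
    (∃! p : ℝ × ℝ, 0 < p.1 ∧ 0 < p.2 ∧
      (a11 * a22 - a12 * a21) - a11 * lam * p.2 - a22 * lam * p.1 + lam ^ 2 * p.1 * p.2 = 0 ∧
      (a11 * a22 - a12 * a21) - a11 * mu * p.2 - a22 * mu * p.1 + mu ^ 2 * p.1 * p.2 = 0) ∧
    (∀ p : ℝ × ℝ, (0 < p.1 ∧ 0 < p.2 ∧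
      (a11 * a22 - a12 * a21) - a11 * lam * p.2 - a22 * lam * p.1 + lam ^ 2 * p.1 * p.2 = 0 ∧
      (a11 * a22 - a12 * a21) - a11 * mu * p.2 - a22 * mu * p.1 + mu ^ 2 * p.1 * p.2 = 0) →
      p.2 = ((a11 * a22 - a12 * a21) * (lam + mu) -
        Real.sqrt (((a11 * a22 - a12 * a21) * (lam + mu)) ^ 2 -
          4 * a11 * a22 * (a11 * a22 - a12 * a21) * lam * mu)) / (2 * a11 * lam * mu)) := by
  have ha11 : a11 < 0 := by linarith
  have hmu : 0 < mu := lt_trans hlam hlm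
  obtain ⟨D, hDdef⟩ : ∃ D, D = a11 * a22 - a12 * a21 := ⟨_, rfl⟩
  rw [← hDdef] at hDet ⊢
  have hc : 0 < -(4 * a11 * a22 * D * lam * mu) := by
    nlinarith [mul_pos (mul_pos hDet h22) (mul_pos hlam hmu)]
  obtain ⟨s, hsdef⟩ : ∃ s,
      s = Real.sqrt ((D * (lam + mu)) ^ 2 - 4 * a11 * a22 * D * lam * mu) := ⟨_, rfl⟩
  rw [← hsdef]
  have hdisc : 0 < (D * (lam + mu)) ^ 2 - 4 * a11 * a22 * D * lam * mu := by
    nlinarith [sq_nonneg (D * (lam + mu))]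
  have hs2 : s ^ 2 = (D * (lam + mu)) ^ 2 - 4 * a11 * a22 * D * lam * mu := by
    rw [hsdef]; exact Real.sq_sqrt hdisc.le
  have hsnn : 0 ≤ s := by rw [hsdef]; exact Real.sqrt_nonneg _
  have hsgt : D * (lam + mu) < s := by
    rw [hsdef]
    rw [show ∀ x y : ℝ, (x < Real.sqrt y) ↔ _ from fun x y => Iff.rfl]
    refine (Real.lt_sqrt (by positivity)).mpr ?_
    nlinarith
  obtain ⟨d2, hd2def⟩ : ∃ d2, d2 = (D * (lam + mu) - s) / (2 * a11 * lam * mu) := ⟨_, rfl⟩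
  rw [← hd2def]
  have hdenneg : 2 * a11 * lam * mu < 0 := by nlinarith [mul_pos hlam hmu]
  have hdenne : 2 * a11 * lam * mu ≠ 0 := ne_of_lt hdenneg
  have hd2pos : 0 < d2 := by
    rw [hd2def]; exact div_pos_of_neg_of_neg (by linarith) hdenneg
  have hd2' : 2 * a11 * lam * mu * d2 = D * (lam + mu) - s := by
    rw [hd2def]; field_simp; exact mul_div_cancel_left₀ _ ha11.ne
  have hq : a11 * lam * mu * d2 ^ 2 - D * (lam + mu) * d2 + D * a22 = 0 := by
    have hq4 : 4 * a11 * lam * mu *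
        (a11 * lam * mu * d2 ^ 2 - D * (lam + mu) * d2 + D * a22) = 0 := by
      linear_combination (2 * a11 * lam * mu * d2 + (D * (lam + mu) - s)
        - 2 * D * (lam + mu)) * hd2' + hs2
    have h4 : (4 : ℝ) * a11 * lam * mu ≠ 0 := by
      intro h; apply hdenne; nlinarith [h]
    rcases mul_eq_zero.mp hq4 with h' | h'
    · exact absurd h' h4
    · exact h'
  obtain ⟨d1, hd1def⟩ : ∃ d1, d1 = D / (lam * mu * d2) := ⟨_, rfl⟩
  have hd1pos : 0 < d1 := by rw [hd1def]; positivity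
  have hd1eq : lam * mu * d1 * d2 = D := by
    rw [hd1def]; field_simp
  have hmud2 : mu * d2 ≠ 0 := by positivity
  have hlamd2 : lam * d2 ≠ 0 := by positivity
  have he1 : D - a11 * lam * d2 - a22 * lam * d1 + lam ^ 2 * d1 * d2 = 0 := by
    have h : mu * d2 * (D - a11 * lam * d2 - a22 * lam * d1 + lam ^ 2 * d1 * d2) = 0 := by
      linear_combination (lam * d2 - a22) * hd1eq - hq
    rcases mul_eq_zero.mp h with h' | h'
    · exact absurd h' hmud2
    · exact h'
  have he2 : D - a11 * mu * d2 - a22 * mu * d1 + mu ^ 2 * d1 * d2 = 0 := by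
    have h : lam * d2 * (D - a11 * mu * d2 - a22 * mu * d1 + mu ^ 2 * d1 * d2) = 0 := by
      linear_combination (mu * d2 - a22) * hd1eq - hq
    rcases mul_eq_zero.mp h with h' | h'
    · exact absurd h' hlamd2
    · exact h'
  have hml : mu - lam ≠ 0 := sub_ne_zero_of_ne (ne_of_gt hlm)
  have key : ∀ p : ℝ × ℝ, (0 < p.1 ∧ 0 < p.2 ∧
      D - a11 * lam * p.2 - a22 * lam * p.1 + lam ^ 2 * p.1 * p.2 = 0 ∧
      D - a11 * mu * p.2 - a22 * mu * p.1 + mu ^ 2 * p.1 * p.2 = 0) →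
      p.2 = d2 ∧ p.1 = d1 := by
    rintro p ⟨hp1, hp2, e1, e2⟩
    have hA : lam * mu * p.1 * p.2 = D := by
      have h : (mu - lam) * (lam * mu * p.1 * p.2 - D) = 0 := by
        linear_combination lam * e2 - mu * e1
      rcases mul_eq_zero.mp h with h' | h'
      · exact absurd h' hml
      · linarith
    have hB : a22 * p.1 + a11 * p.2 = (lam + mu) * p.1 * p.2 := by
      have h : (lam - mu) * ((lam + mu) * p.1 * p.2 - a11 * p.2 - a22 * p.1) = 0 := by
        linear_combination e1 - e2
      rcases mul_eq_zero.mp h with h' | h'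
      · exact absurd h' (by intro hc'; exact hml (by linarith))
      · linarith
    have hq' : a11 * lam * mu * p.2 ^ 2 - D * (lam + mu) * p.2 + D * a22 = 0 := by
      linear_combination ((lam + mu) * p.2 - a22) * hA + lam * mu * p.2 * hB
    have hfac : (p.2 - d2) * (a11 * lam * mu * (p.2 + d2) - D * (lam + mu)) = 0 := by
      linear_combination hq' - hq
    have hp2d2 : p.2 = d2 := by
      rcases mul_eq_zero.mp hfac with h' | h'
      · linarith [sub_eq_zero.mp h']
      · exfalso
        have h1 : a11 * lam * mu * (p.2 + d2) < 0 :=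
          mul_neg_of_neg_of_pos (by linarith) (by linarith)
        have h2 : 0 < D * (lam + mu) := mul_pos hDet (by linarith)
        linarith
    refine ⟨hp2d2, ?_⟩
    have h : lam * mu * d2 * (p.1 - d1) = 0 := by
      rw [hp2d2] at hA
      linear_combination hA - hd1eq
    rcases mul_eq_zero.mp h with h' | h'
    · exact absurd h' (by positivity)
    · linarith
  constructor
  · exact ⟨(d1, d2), ⟨hd1pos, hd2pos, he1, he2⟩, fun p hp => by
      have := key p hp
      exact Prod.ext this.2 this.1⟩
  · intro p hp
    exact (key p hp).1
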